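/- Triangle identity and comparability g̃ ≈ g for non-grazing collisions (equation (2.68) and Lemma 2.10): Let p, q ∈ ℝ³ with p + q ≠ 0 and p ≠ q, let ω ∈ 𝕊², and let p', q' be the post-collisional momenta of the center-of-momentum parametrization. Set g := √(2(p⁰q⁰ − p·q − 1)), g̃ := √(2(p'⁰q⁰ − p'·q − 1)), ḡ := √(2(p'⁰p⁰ − p'·p − 1)), and define the scattering angle by cosθ := (−(p⁰−q⁰)(p'⁰−q'⁰) + (p−q)·(p'−q'))/g². Then g² = g̃² + ḡ², cosθ = 1 − 2ḡ²/g², and if cosθ ≥ 0 then g̃² ≤ g² ≤ 2 g̃². -/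

import Mathlib

open scoped InnerProductSpace

noncomputable section

/-- Momentum space ℝ³ with the Euclidean structure. -/
abbrev E3 : Type := EuclideanSpace ℝ (Fin 3)

/-- The relativistic energy `p⁰ = √(1+|p|²)`. -/
def en (p : E3) : ℝ := Real.sqrt (1 + ‖p‖ ^ 2)

/-- The relative momentum `g(p,q) = √(2(p⁰q⁰ − p·q − 1))`. -/
def relg (p q : E3) : ℝ := Real.sqrt (2 * (en p * en q - ⟪p, q⟫_ℝ - 1))

/-- `s = g² + 4`. -/
def srel (p q : E3) : ℝ := relg p q ^ 2 + 4

/-- The post-collisional momentum `p'` in the center-of-momentum parametrization. -/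
def pPost (p q ω : E3) : E3 :=
  (2 : ℝ)⁻¹ • (p + q) + (relg p q / 2) •
    (ω + (((en p + en q) / Real.sqrt (srel p q) - 1) *
      (⟪p + q, ω⟫_ℝ / ‖p + q‖ ^ 2)) • (p + q))

/-- The post-collisional momentum `q' = p + q − p'`. -/
def qPost (p q ω : E3) : E3 := p + q - pPost p q ω

/-- The cosine of the scattering angle. -/
def cosTheta (p q ω : E3) : ℝ :=
  (-((en p - en q) * (en (pPost p q ω) - en (qPost p q ω))) +
    ⟪p - q, pPost p q ω - qPost p q ω⟫_ℝ) / relg p q ^ 2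

/-- The cross product on ℝ³ (transported to the Euclidean space structure). -/
def cross3 (p q : E3) : E3 :=
  (EuclideanSpace.equiv (Fin 3) ℝ).symm
    (crossProduct ((EuclideanSpace.equiv (Fin 3) ℝ) p) ((EuclideanSpace.equiv (Fin 3) ℝ) q))


lemma en_sq (p : E3) : en p ^ 2 = 1 + ‖p‖ ^ 2 :=
  Real.sq_sqrt (by positivity)

lemma en_pos (p : E3) : 0 < en p := Real.sqrt_pos.2 (by positivity)

lemma one_le_mink (p q : E3) : 1 ≤ en p * en q - ⟪p, q⟫_ℝ := by
  have hcs : ⟪p, q⟫_ℝ * ⟪p, q⟫_ℝ ≤ ⟪p, p⟫_ℝ * ⟪q, q⟫_ℝ := real_inner_mul_inner_self_le p q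
  rw [real_inner_self_eq_norm_sq, real_inner_self_eq_norm_sq] at hcs
  have h1 : (1 + ⟪p, q⟫_ℝ) ^ 2 ≤ en p ^ 2 * en q ^ 2 := by
    rw [en_sq, en_sq]
    nlinarith [sq_nonneg (‖p‖ - ‖q‖), abs_real_inner_le_norm p q, abs_nonneg ⟪p,q⟫_ℝ,
      le_abs_self ⟪p,q⟫_ℝ, norm_nonneg p, norm_nonneg q]
  rcases le_or_gt (1 + ⟪p, q⟫_ℝ) 0 with h | h
  · nlinarith [mul_pos (en_pos p) (en_pos q)]
  · nlinarith [mul_pos (en_pos p) (en_pos q), h1]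

lemma one_lt_mink (p q : E3) (hne : p ≠ q) : 1 < en p * en q - ⟪p, q⟫_ℝ := by
  have hcs : ⟪p, q⟫_ℝ * ⟪p, q⟫_ℝ ≤ ⟪p, p⟫_ℝ * ⟪q, q⟫_ℝ := real_inner_mul_inner_self_le p q
  rw [real_inner_self_eq_norm_sq, real_inner_self_eq_norm_sq] at hcs
  have hd : 0 < ‖p - q‖ ^ 2 := pow_pos (norm_pos_iff.2 (sub_ne_zero.2 hne)) 2
  rw [@norm_sub_sq_real] at hd
  have h1 : (1 + ⟪p, q⟫_ℝ) ^ 2 < en p ^ 2 * en q ^ 2 := by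
    rw [en_sq, en_sq]; nlinarith
  rcases le_or_gt (1 + ⟪p, q⟫_ℝ) 0 with h | h
  · nlinarith [mul_pos (en_pos p) (en_pos q)]
  · nlinarith [mul_pos (en_pos p) (en_pos q), h1]

lemma relg_sq (p q : E3) : relg p q ^ 2 = 2 * (en p * en q - ⟪p, q⟫_ℝ - 1) :=
  Real.sq_sqrt (by nlinarith [one_le_mink p q])

lemma srel_eq (p q : E3) : srel p q = (en p + en q) ^ 2 - ‖p + q‖ ^ 2 := by
  rw [srel, relg_sq, @norm_add_sq_real]
  nlinarith [en_sq p, en_sq q]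

lemma scalar1 (E a g r : ℝ) (hN : E^2 - r^2 ≠ 0) (hr : r ≠ 0) (h2 : g^2 = r^2 - 4) :
    1 + ((2⁻¹ + g/2*((E/r-1)*(a/(E^2-r^2))))^2 * (E^2-r^2)
      + (2⁻¹ + g/2*((E/r-1)*(a/(E^2-r^2)))) * g * a + (g/2)^2)
      = (E/2 + g*a/(2*r))^2 := by
  field_simp
  linear_combination (r^2*(E^2-r^2)) * h2

lemma aux_nonneg (E a g r : ℝ) (hE : 0 < E) (hr : 0 < r) (hg : 0 ≤ g)
    (ha2 : a^2 ≤ E^2 - r^2) (hg2 : g^2 = r^2 - 4) : 0 ≤ r*E + g*a := by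
  have h4 : 0 ≤ E^2 - r^2 := le_trans (sq_nonneg a) ha2
  have hb : g^2 * a^2 ≤ (r^2-4)*(E^2-r^2) := by
    calc g^2*a^2 ≤ g^2*(E^2-r^2) := mul_le_mul_of_nonneg_left ha2 (sq_nonneg g)
    _ = (r^2-4)*(E^2-r^2) := by rw [hg2]
  nlinarith [hb, mul_pos hr hE, h4, pow_pos hr 4, sq_nonneg (r*E + g*a)]

lemma expand_norm (c d : ℝ) (n w : E3) (hw : ‖w‖ = 1) :
    ‖c • n + d • w‖ ^ 2 = c^2 * ‖n‖^2 + c * d * (2 * ⟪n, w⟫_ℝ) + d^2 := by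
  rw [← real_inner_self_eq_norm_sq]
  simp only [inner_add_left, inner_add_right, real_inner_smul_left, real_inner_smul_right,
    real_inner_self_eq_norm_sq, real_inner_comm w n, hw, norm_smul, mul_pow, sq_abs,
    Real.norm_eq_abs, one_pow]
  ring

lemma pPost_eq (p q ω : E3) :
    pPost p q ω = (2⁻¹ + relg p q / 2 * (((en p + en q) / Real.sqrt (srel p q) - 1) *
      (⟪p + q, ω⟫_ℝ / ‖p + q‖ ^ 2))) • (p + q) + (relg p q / 2) • ω := by
  rw [pPost]; module

lemma qPost_eq (p q ω : E3) :
    qPost p q ω = (2⁻¹ - relg p q / 2 * (((en p + en q) / Real.sqrt (srel p q) - 1) *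
      (⟪p + q, ω⟫_ℝ / ‖p + q‖ ^ 2))) • (p + q) + (-(relg p q / 2)) • ω := by
  rw [qPost, pPost]; module

section main
variable (p q ω : E3)

lemma srel_pos : 0 < srel p q := by
  have := sq_nonneg (relg p q); rw [srel]; linarith

lemma r_sq : Real.sqrt (srel p q) ^ 2 = srel p q := Real.sq_sqrt (srel_pos p q).le

lemma r_pos : 0 < Real.sqrt (srel p q) := Real.sqrt_pos.2 (srel_pos p q)

lemma hg2' : relg p q ^ 2 = Real.sqrt (srel p q) ^ 2 - 4 := by
  rw [r_sq, srel]; ring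

lemma hNr : ‖p + q‖ ^ 2 = (en p + en q) ^ 2 - Real.sqrt (srel p q) ^ 2 := by
  rw [r_sq, srel_eq]; ring

lemma hNne (hpq : p + q ≠ 0) :
    (en p + en q) ^ 2 - Real.sqrt (srel p q) ^ 2 ≠ 0 := by
  rw [← hNr]; exact (pow_pos (norm_pos_iff.2 hpq) 2).ne'

lemma ha2 (hpq : p + q ≠ 0) (hω : ‖ω‖ = 1) :
    ⟪p + q, ω⟫_ℝ ^ 2 ≤ (en p + en q) ^ 2 - Real.sqrt (srel p q) ^ 2 := by
  rw [← hNr]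
  have := real_inner_mul_inner_self_le (p + q) ω
  rw [real_inner_self_eq_norm_sq, real_inner_self_eq_norm_sq, hω] at this
  nlinarith [this]

lemma en_pPost (hpq : p + q ≠ 0) (hω : ‖ω‖ = 1) :
    en (pPost p q ω) = (en p + en q) / 2 +
      relg p q * ⟪p + q, ω⟫_ℝ / (2 * Real.sqrt (srel p q)) := by
  set E := en p + en q with hE
  set g := relg p q with hg
  set r := Real.sqrt (srel p q) with hr
  set a := ⟪p + q, ω⟫_ℝ with ha
  have key : 1 + ‖pPost p q ω‖ ^ 2 = (E/2 + g*a/(2*r))^2 := by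
    rw [pPost_eq, expand_norm _ _ _ _ hω, hNr]
    linear_combination scalar1 E a g r (hNne p q hpq) (r_pos p q).ne' (hg2' p q)
  have hnn : 0 ≤ E/2 + g*a/(2*r) := by
    have h0 : 0 ≤ r*E + g*a := aux_nonneg E a g r (add_pos (en_pos p) (en_pos q)) (r_pos p q)
      (Real.sqrt_nonneg _) (ha2 p q ω hpq hω) (hg2' p q)
    have hrne := (r_pos p q).ne'
    have : E/2 + g*a/(2*r) = (r*E + g*a)/(2*r) := by
      field_simp; rw [add_div, mul_div_cancel_right₀ _ (show r ≠ 0 from hrne)]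
    rw [this]
    exact div_nonneg h0 (by positivity)
  rw [en, key, Real.sqrt_sq hnn]

lemma en_qPost (hpq : p + q ≠ 0) (hω : ‖ω‖ = 1) :
    en (qPost p q ω) = (en p + en q) / 2 -
      relg p q * ⟪p + q, ω⟫_ℝ / (2 * Real.sqrt (srel p q)) := by
  set E := en p + en q with hE
  set g := relg p q with hg
  set r := Real.sqrt (srel p q) with hr
  set a := ⟪p + q, ω⟫_ℝ with ha
  have key : 1 + ‖qPost p q ω‖ ^ 2 = (E/2 - g*a/(2*r))^2 := by
    rw [qPost_eq, expand_norm _ _ _ _ hω, hNr]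
    linear_combination scalar1 E (-a) g r (hNne p q hpq) (r_pos p q).ne' (hg2' p q)
  have hnn : 0 ≤ E/2 - g*a/(2*r) := by
    have ha2' : (-a)^2 ≤ E^2 - r^2 := by
      rw [neg_pow]; simpa using ha2 p q ω hpq hω
    have h0 : 0 ≤ r*E + g*(-a) := aux_nonneg E (-a) g r (add_pos (en_pos p) (en_pos q)) (r_pos p q)
      (Real.sqrt_nonneg _) ha2' (hg2' p q)
    have hrne := (r_pos p q).ne'
    have : E/2 - g*a/(2*r) = (r*E + g*(-a))/(2*r) := by
      field_simp; rw [add_div, mul_div_cancel_right₀ _ (show r ≠ 0 from hrne), neg_div, ← sub_eq_add_neg]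
    rw [this]
    exact div_nonneg h0 (by positivity)
  rw [en, key, Real.sqrt_sq hnn]

lemma inner_pPost (hpq : p + q ≠ 0) :
    ⟪p + q, pPost p q ω⟫_ℝ = (2⁻¹ + relg p q / 2 * (((en p + en q) / Real.sqrt (srel p q) - 1) *
      (⟪p + q, ω⟫_ℝ / ‖p + q‖ ^ 2))) * ‖p + q‖ ^ 2 + (relg p q / 2) * ⟪p + q, ω⟫_ℝ := by
  rw [pPost_eq]
  simp only [inner_add_right, real_inner_smul_right, real_inner_self_eq_norm_sq]
  rw [show ⟪p+q, p⟫_ℝ + ⟪p+q, q⟫_ℝ = ‖p+q‖^2 from by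
    rw [← inner_add_right, real_inner_self_eq_norm_sq]]

lemma star (hpq : p + q ≠ 0) (hω : ‖ω‖ = 1) :
    en (pPost p q ω) * (en p + en q) -
      (⟪pPost p q ω, p⟫_ℝ + ⟪pPost p q ω, q⟫_ℝ) = Real.sqrt (srel p q) ^ 2 / 2 := by
  have hin : ⟪pPost p q ω, p⟫_ℝ + ⟪pPost p q ω, q⟫_ℝ = ⟪p + q, pPost p q ω⟫_ℝ := by
    rw [inner_add_left, real_inner_comm p, real_inner_comm q]
  rw [hin, inner_pPost p q ω hpq, en_pPost p q ω hpq hω, hNr]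
  have h1 := hNne p q hpq
  have h2 := (r_pos p q).ne'
  set E := en p + en q
  set g := relg p q
  set r := Real.sqrt (srel p q)
  set a := ⟪p + q, ω⟫_ℝ
  field_simp
  ring

end main

/-- **Triangle identity and comparability `g̃ ≈ g` for non-grazing collisions**
(equation (2.68) and Lemma 2.10). -/
theorem triangle_identity_and_comparability (p q ω : E3)
    (hpq : p + q ≠ 0) (hne : p ≠ q) (hω : ‖ω‖ = 1) :
    relg p q ^ 2 = relg (pPost p q ω) q ^ 2 + relg (pPost p q ω) p ^ 2 ∧
    cosTheta p q ω = 1 - 2 * relg (pPost p q ω) p ^ 2 / relg p q ^ 2 ∧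
    (0 ≤ cosTheta p q ω →
      relg (pPost p q ω) q ^ 2 ≤ relg p q ^ 2 ∧
        relg p q ^ 2 ≤ 2 * relg (pPost p q ω) q ^ 2) := by
  have hgpos : 0 < relg p q ^ 2 := by
    rw [relg_sq]; nlinarith [one_lt_mink p q hne]
  have hr2'' : Real.sqrt (srel p q) ^ 2 = 2 * (en p * en q - ⟪p, q⟫_ℝ - 1) + 4 := by
    rw [r_sq, srel, relg_sq]
  have hstar := star p q ω hpq hω
  -- triangle identity
  have t1 : relg p q ^ 2 = relg (pPost p q ω) q ^ 2 + relg (pPost p q ω) p ^ 2 := by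
    rw [relg_sq p q, relg_sq (pPost p q ω) q, relg_sq (pPost p q ω) p]
    linear_combination (-2) * hstar - hr2''
  -- cosTheta numerator
  have hq' : en (qPost p q ω) = (en p + en q) - en (pPost p q ω) := by
    rw [en_pPost p q ω hpq hω, en_qPost p q ω hpq hω]; ring
  have hnum : -((en p - en q) * (en (pPost p q ω) - en (qPost p q ω))) +
      ⟪p - q, pPost p q ω - qPost p q ω⟫_ℝ
      = relg (pPost p q ω) q ^ 2 - relg (pPost p q ω) p ^ 2 := by
    rw [hq', relg_sq (pPost p q ω) q, relg_sq (pPost p q ω) p, qPost]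
    simp only [inner_sub_left, inner_sub_right, inner_add_right, inner_add_left,
      real_inner_self_eq_norm_sq, real_inner_comm (pPost p q ω) p, real_inner_comm (pPost p q ω) q]
    linear_combination en_sq p - en_sq q - real_inner_comm q p
  have t2 : cosTheta p q ω = 1 - 2 * relg (pPost p q ω) p ^ 2 / relg p q ^ 2 := by
    rw [cosTheta, hnum]
    rw [eq_sub_iff_add_eq, div_add_div _ _ hgpos.ne' hgpos.ne', div_eq_one_iff_eq (by positivity)]
    linear_combination (-(relg p q ^ 2)) * t1
  refine ⟨t1, t2, fun hcos => ?_⟩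
  have hbar : 0 ≤ relg (pPost p q ω) p ^ 2 := sq_nonneg _
  have h3 : 2 * relg (pPost p q ω) p ^ 2 ≤ relg p q ^ 2 := by
    rw [t2] at hcos
    have := (div_le_one hgpos).mp (by linarith : 2 * relg (pPost p q ω) p ^ 2 / relg p q ^ 2 ≤ 1)
    linarith
  constructor <;> linarith
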